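/- Let G be a finite simple graph with no isolated vertex. Then γ_oitR(G) ≤ γ_oiR(G) + γ(G). -/

import Mathlib

namespace OITRPaper

variable {V : Type*}

/-- `S` is a vertex cover of `G`: every edge of `G` is incident to a vertex of `S`. -/
def IsVertexCover (G : SimpleGraph V) (S : Set V) : Prop :=
  ∀ ⦃u v : V⦄, G.Adj u v → u ∈ S ∨ v ∈ S

/-- `S` is an independent set of `G`: no two vertices of `S` are adjacent. -/
def IsIndepSet (G : SimpleGraph V) (S : Set V) : Prop :=
  ∀ ⦃u : V⦄, u ∈ S → ∀ ⦃v : V⦄, v ∈ S → ¬ G.Adj u v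

/-- `S` is a dominating set of `G`. -/
def IsDomSet (G : SimpleGraph V) (S : Set V) : Prop :=
  ∀ v : V, v ∉ S → ∃ u ∈ S, G.Adj v u

/-- `S` is a total dominating set of `G`: every vertex has a neighbor in `S`. -/
def IsTotalDomSet (G : SimpleGraph V) (S : Set V) : Prop :=
  ∀ v : V, ∃ u ∈ S, G.Adj v u

/-- `G` is claw-free: it contains no induced `K_{1,3}`. -/
def ClawFree (G : SimpleGraph V) : Prop :=
  ∀ c a b d : V, G.Adj c a → G.Adj c b → G.Adj c d →
    a ≠ b → a ≠ d → b ≠ d → G.Adj a b ∨ G.Adj a d ∨ G.Adj b d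

/-- `f` is a Roman dominating function on `G`. -/
def IsRDF (G : SimpleGraph V) (f : V → ℕ) : Prop :=
  (∀ v, f v ≤ 2) ∧ ∀ v, f v = 0 → ∃ u, G.Adj v u ∧ f u = 2

/-- `f` is an outer-independent Roman dominating function on `G`. -/
def IsOIRDF (G : SimpleGraph V) (f : V → ℕ) : Prop :=
  IsRDF G f ∧ IsIndepSet G {v | f v = 0}

/-- `f` is an outer-independent total Roman dominating function on `G`. -/
def IsOITRDF (G : SimpleGraph V) (f : V → ℕ) : Prop :=
  IsOIRDF G f ∧ ∀ v, 1 ≤ f v → ∃ u, G.Adj v u ∧ 1 ≤ f u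

variable [Fintype V]

/-- The vertex cover number `α(G)`. -/
noncomputable def vertexCoverNum (G : SimpleGraph V) : ℕ :=
  sInf {m | ∃ S : Set V, IsVertexCover G S ∧ S.ncard = m}

/-- The independence number `β(G)`. -/
noncomputable def indepNum (G : SimpleGraph V) : ℕ :=
  sSup {m | ∃ S : Set V, IsIndepSet G S ∧ S.ncard = m}

/-- The domination number `γ(G)`. -/
noncomputable def domNum (G : SimpleGraph V) : ℕ :=
  sInf {m | ∃ S : Set V, IsDomSet G S ∧ S.ncard = m}

/-- The total domination number `γ_t(G)`. -/
noncomputable def totalDomNum (G : SimpleGraph V) : ℕ :=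
  sInf {m | ∃ S : Set V, IsTotalDomSet G S ∧ S.ncard = m}

/-- The outer-independent total domination number `γ_{t,oi}(G)`. -/
noncomputable def oiTotalDomNum (G : SimpleGraph V) : ℕ :=
  sInf {m | ∃ S : Set V, IsTotalDomSet G S ∧ IsIndepSet G Sᶜ ∧ S.ncard = m}

/-- The Roman domination number `γ_R(G)`. -/
noncomputable def romanDomNum (G : SimpleGraph V) : ℕ :=
  sInf {w | ∃ f : V → ℕ, IsRDF G f ∧ ∑ v, f v = w}

/-- The outer-independent Roman domination number `γ_{oiR}(G)`. -/
noncomputable def oiRomanDomNum (G : SimpleGraph V) : ℕ :=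
  sInf {w | ∃ f : V → ℕ, IsOIRDF G f ∧ ∑ v, f v = w}

/-- The outer-independent total Roman domination number `γ_{oitR}(G)`. -/
noncomputable def oitRomanDomNum (G : SimpleGraph V) : ℕ :=
  sInf {w | ∃ f : V → ℕ, IsOITRDF G f ∧ ∑ v, f v = w}


/-- For any graph with no isolated vertex, `γ_oitR(G) ≤ γ_oiR(G) + γ(G)`. -/
theorem stmt7 {V : Type*} [Fintype V] (G : SimpleGraph V)
    (hiso : ∀ v : V, ∃ u, G.Adj v u) :
    oitRomanDomNum G ≤ oiRomanDomNum G + domNum G := by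
  classical
  have hne1 : {w | ∃ f : V → ℕ, IsOIRDF G f ∧ ∑ v, f v = w}.Nonempty :=
    ⟨∑ _v : V, 2, fun _ => 2,
      ⟨⟨fun _ => le_refl 2, fun v h => by simp at h⟩, fun u hu => by simp [IsIndepSet] at hu⟩, rfl⟩
  have hne2 : {m | ∃ S : Set V, IsDomSet G S ∧ S.ncard = m}.Nonempty :=
    ⟨(Set.univ : Set V).ncard, Set.univ, fun v hv => absurd (Set.mem_univ v) hv, rfl⟩
  obtain ⟨f, hf, hfw⟩ := Nat.sInf_mem hne1
  obtain ⟨D, hD, hDw⟩ := Nat.sInf_mem hne2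
  have hgoal : oiRomanDomNum G + domNum G = (∑ v, f v) + D.ncard := by
    rw [hfw, hDw]; rfl
  rw [hgoal]
  clear hgoal hfw hDw hne1 hne2
  have hf2 : ∀ v, f v ≤ 2 := hf.1.1
  have hrdf : ∀ v, f v = 0 → ∃ u, G.Adj v u ∧ f u = 2 := hf.1.2
  have hindep : IsIndepSet G {v | f v = 0} := hf.2
  choose c hc using hiso
  set bad : Set V := {v | v ∈ D ∧ 1 ≤ f v ∧ ∀ u, G.Adj v u → f u = 0 ∧ u ∉ D} with hbad
  set T : Set V := D ∪ (c '' bad) with hT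
  set g : V → ℕ := fun v => if v ∈ T then max (f v) 1 else f v with hg
  have hge : ∀ v, f v ≤ g v := by
    intro v
    simp only [hg]
    split <;> simp
  have hT1 : ∀ v ∈ T, 1 ≤ g v := by
    intro v hv
    simp only [hg, if_pos hv]
    exact le_max_right _ _
  have hg0 : ∀ v, g v = 0 → f v = 0 ∧ v ∉ T := by
    intro v hv
    by_cases h : v ∈ T
    · have := hT1 v h; omega
    · refine ⟨?_, h⟩
      simpa only [hg, if_neg h] using hv
  -- g is an OITRDF
  have hgood : IsOITRDF G g := by
    refine ⟨⟨⟨?_, ?_⟩, ?_⟩, ?_⟩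
    · intro v
      simp only [hg]
      split
      · exact max_le (hf2 v) (by norm_num)
      · exact hf2 v
    · intro v hv
      obtain ⟨hfv, _⟩ := hg0 v hv
      obtain ⟨u, hadj, hu2⟩ := hrdf v hfv
      refine ⟨u, hadj, ?_⟩
      have h1 := hge u
      have h3 : g u ≤ 2 := by
        simp only [hg]; split
        · exact max_le (hf2 u) (by norm_num)
        · exact hf2 u
      omega
    · intro u hu v hv
      exact hindep (hg0 u hu).1 (hg0 v hv).1
    · intro v hv
      by_cases hfv : f v = 0
      · obtain ⟨u, hadj, hu2⟩ := hrdf v hfv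
        exact ⟨u, hadj, le_trans (by omega) (hge u)⟩
      · have hfv1 : 1 ≤ f v := Nat.one_le_iff_ne_zero.mpr hfv
        by_cases hvD : v ∈ D
        · by_cases hbadv : v ∈ bad
          · refine ⟨c v, hc v, hT1 _ ?_⟩
            rw [hT]
            exact Or.inr ⟨v, hbadv, rfl⟩
          · have : ¬ (∀ u, G.Adj v u → f u = 0 ∧ u ∉ D) := by
              intro hall
              exact hbadv (by rw [hbad]; exact ⟨hvD, hfv1, hall⟩)
            push_neg at this
            obtain ⟨u, hadj, hu⟩ := this
            refine ⟨u, hadj, ?_⟩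
            by_cases hfu : f u = 0
            · exact hT1 u (by rw [hT]; exact Or.inl (hu hfu))
            · exact le_trans (Nat.one_le_iff_ne_zero.mpr hfu) (hge u)
        · obtain ⟨u, huD, hadj⟩ := hD v hvD
          exact ⟨u, hadj, hT1 u (by rw [hT]; exact Or.inl huD)⟩
  -- weight bound
  have hsum : ∑ v, g v ≤ (∑ v, f v) + D.ncard := by
    have hpt : ∀ v, g v ≤ f v + (if v ∈ T ∧ f v = 0 then 1 else 0) := by
      intro v
      by_cases hvT : v ∈ T
      · by_cases hfv : f v = 0
        · simp [hg, hvT, hfv]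
        · simp only [hg, if_pos hvT, if_neg (by tauto : ¬ (v ∈ T ∧ f v = 0))]
          have : 1 ≤ f v := Nat.one_le_iff_ne_zero.mpr hfv
          omega
      · simp [hg, hvT]
    calc ∑ v, g v ≤ ∑ v, (f v + (if v ∈ T ∧ f v = 0 then 1 else 0)) :=
          Finset.sum_le_sum (fun v _ => hpt v)
      _ = (∑ v, f v) + ∑ v, (if v ∈ T ∧ f v = 0 then 1 else 0) := Finset.sum_add_distrib
      _ ≤ (∑ v, f v) + D.ncard := by
          gcongr
          have h1 : ∑ v, (if v ∈ T ∧ f v = 0 then 1 else 0) =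
              (Finset.univ.filter (fun v => v ∈ T ∧ f v = 0)).card :=
            (Finset.card_filter _ _).symm
          rw [h1]
          have h2 : (Finset.univ.filter (fun v => v ∈ T ∧ f v = 0)).card
              = (T ∩ {v | f v = 0}).ncard := by
            rw [Set.ncard_eq_toFinset_card']
            congr 1
            ext v
            simp [Set.mem_inter_iff]
          rw [h2]
          have hsub : T ∩ {v | f v = 0} ⊆ (D ∩ {v | f v = 0}) ∪ c '' bad := by
            rintro v ⟨hvT, hv0⟩
            rw [hT] at hvT
            rcases hvT with h | h
            · exact Or.inl ⟨h, hv0⟩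
            · exact Or.inr h
          calc (T ∩ {v | f v = 0}).ncard
              ≤ ((D ∩ {v | f v = 0}) ∪ c '' bad).ncard :=
                Set.ncard_le_ncard hsub (Set.toFinite _)
            _ ≤ (D ∩ {v | f v = 0}).ncard + (c '' bad).ncard := Set.ncard_union_le _ _
            _ ≤ (D ∩ {v | f v = 0}).ncard + bad.ncard :=
                Nat.add_le_add_left (Set.ncard_image_le bad.toFinite) _
            _ = ((D ∩ {v | f v = 0}) ∪ bad).ncard := by
                rw [Set.ncard_union_eq _ (Set.toFinite _) (Set.toFinite _)]
                rw [Set.disjoint_left]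
                rintro v ⟨_, hv0⟩ hvbad
                rw [hbad] at hvbad
                obtain ⟨_, hv1, _⟩ := hvbad
                simp only [Set.mem_setOf_eq] at hv0
                omega
            _ ≤ D.ncard := by
                apply Set.ncard_le_ncard _ (Set.toFinite _)
                rintro v hv
                rcases hv with ⟨hvD, _⟩ | hvb
                · exact hvD
                · rw [hbad] at hvb; exact hvb.1
  exact le_trans (Nat.sInf_le ⟨g, hgood, rfl⟩) hsum

end OITRPaper
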